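/- Suppose U, C ∈ GL⁺(H), U and U⁻¹ commute with C, and {f_k} ⊆ H is complete and satisfies L Σ|c_k|² ≤ |⟨Σ c_k Uf_k, Σ c_k Cf_k⟩| ≤ P Σ|c_k|² for all {c_k} ∈ ℓ²(ℕ) and some L, P > 0. Then for any finitely supported {c_k}, ‖Σ_k c_k f_k‖² ≤ ‖(CU)^{-1/2}‖² P Σ_k |c_k|²; in particular Σ_k c_k f_k converges for all {c_k} ∈ ℓ², so {f_k} is a Bessel sequence, and {f_k} is a (U, C)-controlled Riesz basis. -/

import Mathlib

open scoped ComplexInnerProductSpace ENNReal NNReal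
open ContinuousLinearMap Filter

section AuxSum
variable {H : Type*} [NormedAddCommGroup H] [NormedSpace ℂ H] [CompleteSpace H]

lemma aux_B_nonneg (G : ℕ → H) (B : ℝ)
    (hup : ∀ (s : Finset ℕ) (c : ℕ → ℂ), ‖∑ k ∈ s, c k • G k‖ ^ 2 ≤ B * ∑ k ∈ s, ‖c k‖ ^ 2) :
    0 ≤ B := by
  have h := hup {0} (fun _ => 1)
  simp at h
  nlinarith [sq_nonneg ‖G 0‖]

lemma aux_summable (G : ℕ → H) (B : ℝ)
    (hup : ∀ (s : Finset ℕ) (c : ℕ → ℂ), ‖∑ k ∈ s, c k • G k‖ ^ 2 ≤ B * ∑ k ∈ s, ‖c k‖ ^ 2)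
    (c : ℕ → ℂ) (hc : Summable fun k => ‖c k‖ ^ 2) :
    Summable fun k => c k • G k := by
  have hB : 0 ≤ B := aux_B_nonneg G B hup
  have hB1 : (0:ℝ) < B + 1 := by linarith
  rw [summable_iff_vanishing_norm]
  intro ε hε
  obtain ⟨s, hs⟩ := summable_iff_vanishing_norm.1 hc (ε ^ 2 / (B + 1)) (by positivity)
  refine ⟨s, fun t ht => ?_⟩
  have h1 := hup t c
  have h2 := hs t ht
  have h3 : ‖∑ k ∈ t, ‖c k‖ ^ 2‖ = ∑ k ∈ t, ‖c k‖ ^ 2 :=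
    Real.norm_of_nonneg (Finset.sum_nonneg fun _ _ => sq_nonneg _)
  rw [h3] at h2
  have key : ‖∑ k ∈ t, c k • G k‖ ^ 2 < ε ^ 2 := by
    have h4 : B * ∑ k ∈ t, ‖c k‖ ^ 2 ≤ B * (ε ^ 2 / (B + 1)) :=
      mul_le_mul_of_nonneg_left (le_of_lt h2) hB
    have h5 : B * (ε ^ 2 / (B + 1)) < ε ^ 2 := by
      have h6 : (B + 1) * (ε ^ 2 / (B + 1)) = ε ^ 2 := mul_div_cancel₀ _ (ne_of_gt hB1)
      have h7 : 0 < ε ^ 2 / (B + 1) := by positivity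
      nlinarith
    linarith
  exact lt_of_pow_lt_pow_left₀ 2 (le_of_lt hε) key

lemma aux_tsum_bound (G : ℕ → H) (B : ℝ)
    (hup : ∀ (s : Finset ℕ) (c : ℕ → ℂ), ‖∑ k ∈ s, c k • G k‖ ^ 2 ≤ B * ∑ k ∈ s, ‖c k‖ ^ 2)
    (c : ℕ → ℂ) (hc : Summable fun k => ‖c k‖ ^ 2) :
    ‖∑' k, c k • G k‖ ^ 2 ≤ B * ∑' k, ‖c k‖ ^ 2 := by
  have hB : 0 ≤ B := aux_B_nonneg G B hup
  have hsum := aux_summable G B hup c hc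
  have hQ : 0 ≤ B * ∑' k, ‖c k‖ ^ 2 :=
    mul_nonneg hB (tsum_nonneg fun _ => sq_nonneg _)
  have ht : Tendsto (fun s : Finset ℕ => ‖∑ k ∈ s, c k • G k‖) atTop
      (nhds ‖∑' k, c k • G k‖) := hsum.hasSum.norm
  have key : ∀ s : Finset ℕ, ‖∑ k ∈ s, c k • G k‖ ≤ Real.sqrt (B * ∑' k, ‖c k‖ ^ 2) := by
    intro s
    have h1 : ‖∑ k ∈ s, c k • G k‖ ^ 2 ≤ B * ∑' k, ‖c k‖ ^ 2 :=
      le_trans (hup s c)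
        (mul_le_mul_of_nonneg_left (Summable.sum_le_tsum s (fun _ _ => sq_nonneg _) hc) hB)
    nlinarith [Real.sq_sqrt hQ, Real.sqrt_nonneg (B * ∑' k, ‖c k‖ ^ 2), norm_nonneg (∑ k ∈ s, c k • G k)]
  have hle : ‖∑' k, c k • G k‖ ≤ Real.sqrt (B * ∑' k, ‖c k‖ ^ 2) :=
    le_of_tendsto ht (Eventually.of_forall key)
  nlinarith [Real.sq_sqrt hQ, norm_nonneg (∑' k, c k • G k), Real.sqrt_nonneg (B * ∑' k, ‖c k‖ ^ 2)]

end AuxSum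

lemma aux_riesz {H : Type*} [NormedAddCommGroup H] [InnerProductSpace ℂ H] [CompleteSpace H]
    (G : ℕ → H) (L P : ℝ) (hL : 0 < L)
    (hlow : ∀ (s : Finset ℕ) (c : ℕ → ℂ), L * ∑ k ∈ s, ‖c k‖ ^ 2 ≤ ‖∑ k ∈ s, c k • G k‖ ^ 2)
    (hup : ∀ (s : Finset ℕ) (c : ℕ → ℂ), ‖∑ k ∈ s, c k • G k‖ ^ 2 ≤ P * ∑ k ∈ s, ‖c k‖ ^ 2)
    (hdense : (Submodule.span ℂ (Set.range G)).topologicalClosure = ⊤)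
    (e : HilbertBasis ℕ ℂ H) :
    ∃ M : H →L[ℂ] H, Function.Bijective M ∧ ∀ k, G k = M (e k) := by
  classical
  have hP0 : 0 ≤ P := aux_B_nonneg G P hup
  have hrepr2 : ∀ x : H, Summable (fun k => ‖e.repr x k‖ ^ 2) := by
    intro x
    have h := (lp.memℓp (e.repr x)).summable (p := 2) (by norm_num)
    exact h.congr fun k => by
      norm_num
  have hreprnorm : ∀ x : H, ∑' k, ‖e.repr x k‖ ^ 2 = ‖x‖ ^ 2 := by
    intro x
    have h := lp.norm_rpow_eq_tsum (p := 2) (by norm_num) (e.repr x)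
    rw [e.repr.norm_map] at h
    have h2 : ((2:ℝ≥0∞).toReal) = ((2:ℕ):ℝ) := by norm_num
    rw [h2] at h
    simp_rw [Real.rpow_natCast] at h
    exact h.symm
  have hsumm : ∀ x : H, Summable (fun k => e.repr x k • G k) := fun x =>
    aux_summable G P hup _ (hrepr2 x)
  let Mlin : H →ₗ[ℂ] H :=
    { toFun := fun x => ∑' k, e.repr x k • G k
      map_add' := by
        intro x y
        calc ∑' k, e.repr (x + y) k • G k
            = ∑' k, (e.repr x k • G k + e.repr y k • G k) := by
              refine tsum_congr fun k => ?_
              rw [map_add, lp.coeFn_add, Pi.add_apply, add_smul]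
          _ = (∑' k, e.repr x k • G k) + ∑' k, e.repr y k • G k :=
              Summable.tsum_add (hsumm x) (hsumm y)
      map_smul' := by
        intro a x
        have h1 : ∀ k, e.repr (a • x) k • G k = a • (e.repr x k • G k) := by
          intro k
          rw [map_smul, lp.coeFn_smul, Pi.smul_apply, smul_smul, smul_eq_mul]
        calc ∑' k, e.repr (a • x) k • G k
            = ∑' k, a • (e.repr x k • G k) := tsum_congr h1
          _ = a • ∑' k, e.repr x k • G k := Summable.tsum_const_smul a (hsumm x) }
  have hMbound : ∀ x, ‖Mlin x‖ ≤ Real.sqrt P * ‖x‖ := by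
    intro x
    have h := aux_tsum_bound G P hup _ (hrepr2 x)
    rw [hreprnorm x] at h
    calc ‖Mlin x‖ = Real.sqrt (‖Mlin x‖ ^ 2) := (Real.sqrt_sq (norm_nonneg _)).symm
      _ ≤ Real.sqrt (P * ‖x‖ ^ 2) := Real.sqrt_le_sqrt h
      _ = Real.sqrt P * ‖x‖ := by
          rw [Real.sqrt_mul hP0, Real.sqrt_sq (norm_nonneg _)]
  let M : H →L[ℂ] H := Mlin.mkContinuous (Real.sqrt P) hMbound
  have hMapp : ∀ x, M x = ∑' k, e.repr x k • G k := fun x => rfl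
  have hMe : ∀ k, M (e k) = G k := by
    intro k
    rw [hMapp, tsum_eq_single k ?_]
    · rw [e.repr_apply_apply, orthonormal_iff_ite.mp e.orthonormal]
      simp
    · intro j hj
      rw [e.repr_apply_apply, orthonormal_iff_ite.mp e.orthonormal]
      simp [hj]
  have hMfin : ∀ (s : Finset ℕ) (c : ℕ → ℂ),
      M (∑ k ∈ s, c k • e k) = ∑ k ∈ s, c k • G k := by
    intro s c
    rw [map_sum]
    exact Finset.sum_congr rfl fun k _ => by rw [map_smul, hMe]
  have hlow' : ∀ x, L * ‖x‖ ^ 2 ≤ ‖M x‖ ^ 2 := by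
    have hclosed : IsClosed {x : H | L * ‖x‖ ^ 2 ≤ ‖M x‖ ^ 2} :=
      isClosed_le (continuous_const.mul (continuous_norm.pow 2))
        ((M.continuous.norm).pow 2)
    have hsub : (Submodule.span ℂ (Set.range e) : Set H) ⊆
        {x : H | L * ‖x‖ ^ 2 ≤ ‖M x‖ ^ 2} := by
      intro x hx
      rcases Finsupp.mem_span_range_iff_exists_finsupp.1 hx with ⟨d, rfl⟩
      rw [Finsupp.sum]
      show L * ‖∑ i ∈ d.support, d i • e i‖ ^ 2 ≤ ‖M (∑ i ∈ d.support, d i • e i)‖ ^ 2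
      rw [hMfin]
      have hnorm : ‖∑ i ∈ d.support, (d i : ℂ) • e i‖ ^ 2 = ∑ i ∈ d.support, ‖d i‖ ^ 2 := by
        have h2 := inner_self_eq_norm_sq (𝕜 := ℂ) (∑ i ∈ d.support, (d i : ℂ) • e i)
        rw [← h2, e.orthonormal.inner_sum d d d.support, map_sum]
        exact Finset.sum_congr rfl fun i _ => by
          rw [RCLike.conj_mul]
          simp [← Complex.ofReal_pow]
      rw [hnorm]
      exact hlow d.support d
    intro x
    have huniv : (Set.univ : Set H) ⊆ {x : H | L * ‖x‖ ^ 2 ≤ ‖M x‖ ^ 2} := by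
      have hd : Dense (Submodule.span ℂ (Set.range ⇑e) : Set H) := by
        have := e.dense_span
        rwa [← Submodule.dense_iff_topologicalClosure_eq_top] at this
      calc (Set.univ : Set H) = closure (Submodule.span ℂ (Set.range ⇑e) : Set H) :=
            (hd.closure_eq).symm
        _ ⊆ {x : H | L * ‖x‖ ^ 2 ≤ ‖M x‖ ^ 2} := hclosed.closure_subset_iff.2 hsub
    exact huniv (Set.mem_univ x)
  have hsL : 0 < Real.sqrt L := Real.sqrt_pos.2 hL
  have hbound : ∀ x, ‖x‖ ≤ ((⟨(Real.sqrt L)⁻¹, inv_nonneg.2 (Real.sqrt_nonneg L)⟩ : NNReal) : ℝ) * ‖M x‖ := by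
    intro x
    have h1 : Real.sqrt (L * ‖x‖ ^ 2) ≤ Real.sqrt (‖M x‖ ^ 2) := Real.sqrt_le_sqrt (hlow' x)
    rw [Real.sqrt_mul (le_of_lt hL), Real.sqrt_sq (norm_nonneg _),
      Real.sqrt_sq (norm_nonneg _)] at h1
    have h2 : ‖x‖ = (Real.sqrt L)⁻¹ * (Real.sqrt L * ‖x‖) := by
      field_simp
    rw [h2]
    exact mul_le_mul_of_nonneg_left h1 (inv_nonneg.2 (Real.sqrt_nonneg L))
  have hanti := M.antilipschitz_of_bound hbound
  have hinj : Function.Injective M := hanti.injective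
  have hclosedrange : IsClosed (Set.range M) := hanti.isClosed_range M.uniformContinuous
  have hrange_sub : Submodule.span ℂ (Set.range G) ≤ LinearMap.range (M : H →ₗ[ℂ] H) := by
    rw [Submodule.span_le]
    rintro _ ⟨k, rfl⟩
    exact ⟨e k, hMe k⟩
  have htop : (⊤ : Submodule ℂ H) ≤ LinearMap.range (M : H →ₗ[ℂ] H) := by
    rw [← hdense]
    refine Submodule.topologicalClosure_minimal _ hrange_sub ?_
    have : (LinearMap.range (M : H →ₗ[ℂ] H) : Set H) = Set.range M := by
      ext y; simp [LinearMap.mem_range]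
    rw [this]
    exact hclosedrange
  have hsurj : Function.Surjective M := fun y => by
    rcases htop (Submodule.mem_top : y ∈ (⊤ : Submodule ℂ H)) with ⟨x, hx⟩
    exact ⟨x, hx⟩
  exact ⟨M, ⟨hinj, hsurj⟩, fun k => (hMe k).symm⟩

set_option maxHeartbeats 1000000 in
theorem stmt_18 {H : Type*} [NormedAddCommGroup H] [InnerProductSpace ℂ H]
    [CompleteSpace H]
    (U Ui C Ci : H →L[ℂ] H)
    (hUUi : U ∘L Ui = 1) (hUiU : Ui ∘L U = 1)
    (hCCi : C ∘L Ci = 1) (hCiC : Ci ∘L C = 1)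
    (hU : U.IsPositive) (hC : C.IsPositive)
    (hcomm : U ∘L C = C ∘L U) (hcomm' : Ui ∘L C = C ∘L Ui)
    (F : ℕ → H)
    (hcomplete : (Submodule.span ℂ (Set.range F)).topologicalClosure = ⊤)
    (L P : ℝ) (hL : 0 < L) (hP : 0 < P)
    (hineq : ∀ (s : Finset ℕ) (c : ℕ → ℂ),
      L * ∑ k ∈ s, ‖c k‖ ^ 2 ≤
        ‖⟪∑ k ∈ s, c k • U (F k), ∑ k ∈ s, c k • C (F k)⟫‖ ∧
      ‖⟪∑ k ∈ s, c k • U (F k), ∑ k ∈ s, c k • C (F k)⟫‖ ≤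
        P * ∑ k ∈ s, ‖c k‖ ^ 2)
    (R : H →L[ℂ] H) (hR : R.IsPositive)
    (hRsq1 : (C ∘L U) ∘L (R ∘L R) = 1) (hRsq2 : (R ∘L R) ∘L (C ∘L U) = 1) :
    (∀ (s : Finset ℕ) (c : ℕ → ℂ),
      ‖∑ k ∈ s, c k • F k‖ ^ 2 ≤ ‖R‖ ^ 2 * P * ∑ k ∈ s, ‖c k‖ ^ 2) ∧
    (∀ c : ℕ → ℂ, Summable (fun k => ‖c k‖ ^ 2) →
      ∃ x : H, HasSum (fun k => c k • F k) x) ∧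
    (∃ B' : ℝ, 0 < B' ∧ ∀ f : H,
      Summable (fun k => ‖⟪F k, f⟫‖ ^ 2) ∧
      ∑' k, ‖⟪F k, f⟫‖ ^ 2 ≤ B' * ‖f‖ ^ 2) ∧
    (∃ (e : HilbertBasis ℕ ℂ H) (M : H →L[ℂ] H),
      Function.Bijective M ∧ ∀ k, F k = Ui (C (M (e k)))) := by
  classical
  -- operator algebra
  set T : H →L[ℂ] H := C ∘L U with hTdef
  set S : H →L[ℂ] H := R ∘L (C ∘L U) with hSdef
  have h1 : T * (R * R) = 1 := hRsq1
  have h2 : (R * R) * T = 1 := hRsq2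
  have hTR : T * R = R * T := by
    calc T * R = (T * R) * ((R * R) * T) := by rw [h2, mul_one]
      _ = (T * (R * R)) * (R * T) := by simp only [mul_assoc]
      _ = R * T := by rw [h1, one_mul]
  have hSeq : S = R * T := rfl
  have hSS : S * S = T := by
    calc S * S = R * ((T * R) * T) := by simp only [hSeq, mul_assoc]
      _ = R * ((R * T) * T) := by rw [hTR]
      _ = (R * R) * T * T := by simp only [mul_assoc]
      _ = T := by rw [h2, one_mul]
  have hRS : R * S = 1 := by
    calc R * S = (R * R) * T := by simp only [hSeq, mul_assoc]
      _ = 1 := h2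
  have hSR : S * R = 1 := by
    calc S * R = R * (T * R) := by simp only [hSeq, mul_assoc]
      _ = R * (R * T) := by rw [hTR]
      _ = 1 := hRS
  have hRSx : ∀ x, R (S x) = x := fun x => by
    have := ContinuousLinearMap.ext_iff.1 hRS x
    simpa [ContinuousLinearMap.mul_apply] using this
  have hSRx : ∀ x, S (R x) = x := fun x => by
    have := ContinuousLinearMap.ext_iff.1 hSR x
    simpa [ContinuousLinearMap.mul_apply] using this
  -- adjoints
  have hUadj : ContinuousLinearMap.adjoint U = U := isSelfAdjoint_iff'.1 hU.isSelfAdjoint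
  have hRadj : ContinuousLinearMap.adjoint R = R := isSelfAdjoint_iff'.1 hR.isSelfAdjoint
  have hCadj : ContinuousLinearMap.adjoint C = C := isSelfAdjoint_iff'.1 hC.isSelfAdjoint
  have hTadj : ContinuousLinearMap.adjoint T = T := by
    rw [hTdef, adjoint_comp, hUadj, hCadj, hcomm]
  have hSadj : ContinuousLinearMap.adjoint S = S := by
    have : S = R ∘L T := rfl
    rw [this, adjoint_comp, hTadj, hRadj]
    exact hTR
  -- key norm identity
  have hkey : ∀ (s : Finset ℕ) (c : ℕ → ℂ),
      ‖⟪∑ k ∈ s, c k • U (F k), ∑ k ∈ s, c k • C (F k)⟫‖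
        = ‖S (∑ k ∈ s, c k • F k)‖ ^ 2 := by
    intro s c
    set g := ∑ k ∈ s, c k • F k with hg
    have hUg : ∑ k ∈ s, c k • U (F k) = U g := by
      rw [hg, map_sum]
      exact Finset.sum_congr rfl fun k _ => by rw [map_smul]
    have hCg : ∑ k ∈ s, c k • C (F k) = C g := by
      rw [hg, map_sum]
      exact Finset.sum_congr rfl fun k _ => by rw [map_smul]
    rw [hUg, hCg]
    have e1 : ⟪U g, C g⟫ = ⟪g, T g⟫ := by
      conv_lhs => rw [← hUadj]
      rw [adjoint_inner_left]
      congr 1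
      have := ContinuousLinearMap.ext_iff.1 hcomm g
      simpa using this
    have e2 : ⟪g, T g⟫ = ((‖S g‖ : ℂ)) ^ 2 := by
      have hT : T g = S (S g) := by
        have := ContinuousLinearMap.ext_iff.1 hSS g
        simpa [ContinuousLinearMap.mul_apply] using this.symm
      rw [hT]
      conv_lhs => rw [show S (S g) = (ContinuousLinearMap.adjoint S) (S g) by rw [hSadj]]
      rw [adjoint_inner_right, inner_self_eq_norm_sq_to_K]
      norm_cast
    rw [e1, e2]
    simp [← Complex.ofReal_pow]
  -- bounds for ‖S (∑ c F)‖²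
  have hupS : ∀ (s : Finset ℕ) (c : ℕ → ℂ),
      ‖S (∑ k ∈ s, c k • F k)‖ ^ 2 ≤ P * ∑ k ∈ s, ‖c k‖ ^ 2 := by
    intro s c; rw [← hkey s c]; exact (hineq s c).2
  have hlowS : ∀ (s : Finset ℕ) (c : ℕ → ℂ),
      L * ∑ k ∈ s, ‖c k‖ ^ 2 ≤ ‖S (∑ k ∈ s, c k • F k)‖ ^ 2 := by
    intro s c; rw [← hkey s c]; exact (hineq s c).1
  -- Part 1
  have part1 : ∀ (s : Finset ℕ) (c : ℕ → ℂ),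
      ‖∑ k ∈ s, c k • F k‖ ^ 2 ≤ ‖R‖ ^ 2 * P * ∑ k ∈ s, ‖c k‖ ^ 2 := by
    intro s c
    set g := ∑ k ∈ s, c k • F k with hg
    have h3 : ‖g‖ ≤ ‖R‖ * ‖S g‖ := by
      conv_lhs => rw [← hRSx g]
      exact R.le_opNorm _
    have h4 : ‖g‖ ^ 2 ≤ ‖R‖ ^ 2 * ‖S g‖ ^ 2 := by nlinarith [norm_nonneg g, norm_nonneg (S g), norm_nonneg R]
    calc ‖g‖ ^ 2 ≤ ‖R‖ ^ 2 * ‖S g‖ ^ 2 := h4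
      _ ≤ ‖R‖ ^ 2 * (P * ∑ k ∈ s, ‖c k‖ ^ 2) :=
          mul_le_mul_of_nonneg_left (hupS s c) (sq_nonneg _)
      _ = ‖R‖ ^ 2 * P * ∑ k ∈ s, ‖c k‖ ^ 2 := by ring
  have part1' : ∀ (s : Finset ℕ) (c : ℕ → ℂ),
      ‖∑ k ∈ s, c k • F k‖ ^ 2 ≤ (‖R‖ ^ 2 * P) * ∑ k ∈ s, ‖c k‖ ^ 2 := part1
  refine ⟨part1, ?_, ?_, ?_⟩
  · -- Part 2
    intro c hc
    exact ⟨_, (aux_summable F (‖R‖ ^ 2 * P) part1' c hc).hasSum⟩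
  · -- Part 3
    refine ⟨‖R‖ ^ 2 * P + 1, by positivity, fun f => ?_⟩
    have hbd : ∀ s : Finset ℕ, ∑ k ∈ s, ‖⟪F k, f⟫‖ ^ 2 ≤ (‖R‖ ^ 2 * P) * ‖f‖ ^ 2 := by
      intro s
      set c : ℕ → ℂ := fun k => ⟪F k, f⟫ with hc
      set g := ∑ k ∈ s, c k • F k with hg
      set A := ∑ k ∈ s, ‖c k‖ ^ 2 with hA
      have hA0 : 0 ≤ A := Finset.sum_nonneg fun _ _ => sq_nonneg _
      have h1 : ⟪g, f⟫ = ((A : ℂ)) := by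
        rw [hg, sum_inner, hA]
        push_cast
        refine Finset.sum_congr rfl fun k _ => ?_
        rw [inner_smul_left]
        rw [show ⟪F k, f⟫ = c k from rfl, RCLike.conj_mul]
        norm_num
      have h2 : A = ‖⟪g, f⟫‖ := by
        rw [h1, Complex.norm_real, Real.norm_of_nonneg hA0]
      have h3 : ‖⟪g, f⟫‖ ≤ ‖g‖ * ‖f‖ := norm_inner_le_norm _ _
      have h4 : ‖g‖ ^ 2 ≤ (‖R‖ ^ 2 * P) * A := part1' s c
      have hB0 : (0:ℝ) ≤ ‖R‖ ^ 2 * P := by positivity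
      rcases eq_or_lt_of_le hA0 with h | h
      · rw [← h]; positivity
      · have h5 : A ≤ ‖g‖ * ‖f‖ := h2 ▸ h3
        have h6 : A ^ 2 ≤ (‖g‖ * ‖f‖) ^ 2 := pow_le_pow_left₀ hA0 h5 2
        have h8 : ‖g‖ ^ 2 * ‖f‖ ^ 2 ≤ ((‖R‖ ^ 2 * P) * A) * ‖f‖ ^ 2 :=
          mul_le_mul_of_nonneg_right h4 (sq_nonneg _)
        have h9 : A * A ≤ A * ((‖R‖ ^ 2 * P) * ‖f‖ ^ 2) := by
          calc A * A = A ^ 2 := (sq A).symm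
            _ ≤ (‖g‖ * ‖f‖) ^ 2 := h6
            _ = ‖g‖ ^ 2 * ‖f‖ ^ 2 := by ring
            _ ≤ ((‖R‖ ^ 2 * P) * A) * ‖f‖ ^ 2 := h8
            _ = A * ((‖R‖ ^ 2 * P) * ‖f‖ ^ 2) := by ring
        exact le_of_mul_le_mul_left h9 h
    have hsummable : Summable fun k => ‖⟪F k, f⟫‖ ^ 2 :=
      summable_of_sum_le (fun _ => sq_nonneg _) hbd
    refine ⟨hsummable, ?_⟩
    have h10 := Summable.tsum_le_of_sum_le hsummable hbd
    have h11 : (‖R‖ ^ 2 * P) * ‖f‖ ^ 2 ≤ (‖R‖ ^ 2 * P + 1) * ‖f‖ ^ 2 :=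
      mul_le_mul_of_nonneg_right (by linarith) (sq_nonneg _)
    linarith
  · -- Part 4
    -- linear independence of F
    have hFli : LinearIndependent ℂ F := by
      rw [linearIndependent_iff']
      intro s c hsum i hi
      have h0 := hlowS s c
      rw [hsum, map_zero, norm_zero] at h0
      have hzero : ∑ k ∈ s, ‖c k‖ ^ 2 = 0 := by
        have hnn : 0 ≤ ∑ k ∈ s, ‖c k‖ ^ 2 := Finset.sum_nonneg fun _ _ => sq_nonneg _
        nlinarith
      have := (Finset.sum_eq_zero_iff_of_nonneg (fun k _ => sq_nonneg ‖c k‖)).1 hzero i hi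
      have : ‖c i‖ = 0 := by nlinarith [norm_nonneg (c i)]
      simpa using this
    -- Hilbert basis from Gram-Schmidt
    have hsp : ⊤ ≤ (Submodule.span ℂ (Set.range (InnerProductSpace.gramSchmidtNormed ℂ F))).topologicalClosure := by
      rw [InnerProductSpace.span_gramSchmidtNormed_range, InnerProductSpace.span_gramSchmidt, hcomplete]
    let e : HilbertBasis ℕ ℂ H := HilbertBasis.mk (InnerProductSpace.gramSchmidtNormed_orthonormal hFli) hsp
    -- G = S ∘ F satisfies the Riesz bounds
    set G : ℕ → H := fun k => S (F k) with hG
    have hmap : ∀ (s : Finset ℕ) (c : ℕ → ℂ),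
        ∑ k ∈ s, c k • G k = S (∑ k ∈ s, c k • F k) := by
      intro s c
      rw [map_sum]
      exact Finset.sum_congr rfl fun k _ => by rw [map_smul]
    have hlowG : ∀ (s : Finset ℕ) (c : ℕ → ℂ),
        L * ∑ k ∈ s, ‖c k‖ ^ 2 ≤ ‖∑ k ∈ s, c k • G k‖ ^ 2 := by
      intro s c; rw [hmap]; exact hlowS s c
    have hupG : ∀ (s : Finset ℕ) (c : ℕ → ℂ),
        ‖∑ k ∈ s, c k • G k‖ ^ 2 ≤ P * ∑ k ∈ s, ‖c k‖ ^ 2 := by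
      intro s c; rw [hmap]; exact hupS s c
    -- density of span of G
    have hdenseG : (Submodule.span ℂ (Set.range G)).topologicalClosure = ⊤ := by
      have hr : Set.range G = ⇑S '' Set.range F := by
        rw [← Set.range_comp]; rfl
      have hspan : Submodule.span ℂ (Set.range G)
          = Submodule.map (S : H →ₗ[ℂ] H) (Submodule.span ℂ (Set.range F)) := by
        rw [hr]; exact Submodule.span_image (S : H →ₗ[ℂ] H)
      have hclF : closure ((Submodule.span ℂ (Set.range F) : Set H)) = Set.univ := by
        rw [← Submodule.topologicalClosure_coe, hcomplete, Submodule.top_coe]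
      rw [eq_top_iff]
      intro x _
      rw [← SetLike.mem_coe, Submodule.topologicalClosure_coe, hspan, Submodule.map_coe]
      have h1 : (R x) ∈ closure ((Submodule.span ℂ (Set.range F) : Set H)) := by
        rw [hclF]; trivial
      have h2 : S (R x) ∈ ⇑S '' closure ((Submodule.span ℂ (Set.range F) : Set H)) :=
        ⟨R x, h1, rfl⟩
      have h3 := image_closure_subset_closure_image (f := ⇑S)
        (s := ((Submodule.span ℂ (Set.range F) : Set H))) S.continuous h2
      rwa [hSRx x] at h3
    obtain ⟨M₁, hM₁bij, hM₁e⟩ := aux_riesz G L P hL hlowG hupG hdenseG e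
    -- assemble final M
    refine ⟨e, Ci ∘L (U ∘L (R ∘L M₁)), ?_, ?_⟩
    · have hCCix : ∀ x, C (Ci x) = x := fun x => by
        have := ContinuousLinearMap.ext_iff.1 hCCi x; simpa using this
      have hCiCx : ∀ x, Ci (C x) = x := fun x => by
        have := ContinuousLinearMap.ext_iff.1 hCiC x; simpa using this
      have hUUix : ∀ x, U (Ui x) = x := fun x => by
        have := ContinuousLinearMap.ext_iff.1 hUUi x; simpa using this
      have hUiUx : ∀ x, Ui (U x) = x := fun x => by
        have := ContinuousLinearMap.ext_iff.1 hUiU x; simpa using this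
      have hCibij : Function.Bijective Ci := Function.bijective_iff_has_inverse.2 ⟨C, hCCix, hCiCx⟩
      have hUbij : Function.Bijective U := Function.bijective_iff_has_inverse.2 ⟨Ui, hUiUx, hUUix⟩
      have hRbij : Function.Bijective R := Function.bijective_iff_has_inverse.2 ⟨S, hSRx, hRSx⟩
      have hco : ⇑(Ci ∘L (U ∘L (R ∘L M₁))) = ⇑Ci ∘ ⇑U ∘ ⇑R ∘ ⇑M₁ := rfl
      rw [hco]
      exact hCibij.comp (hUbij.comp (hRbij.comp hM₁bij))
    · intro k
      have hUiUx : ∀ x, Ui (U x) = x := fun x => by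
        have := ContinuousLinearMap.ext_iff.1 hUiU x; simpa using this
      have hCCix : ∀ x, C (Ci x) = x := fun x => by
        have := ContinuousLinearMap.ext_iff.1 hCCi x; simpa using this
      have : (Ci ∘L (U ∘L (R ∘L M₁))) (e k) = Ci (U (F k)) := by
        simp only [ContinuousLinearMap.comp_apply]
        rw [← hM₁e k, hG]
        simp only []
        rw [hRSx (F k)]
      rw [this, hCCix, hUiUx]
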